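/- Let ρ : X → Y be a continuous surjective map between compact Hausdorff spaces, let μ be a regular Borel probability measure on X, and let ν be the pushforward of μ along ρ. Assume ν({y}) = 0 for every y ∈ Y. Then for any Bernstein set Z ⊆ Y, the set ρ⁻¹(Z) is not measurable with respect to the completion of μ. -/

import Mathlib

open MeasureTheory

/-- A Bernstein set: both it and its complement meet every uncountable closed set. -/
def IsBernstein {Y : Type*} [TopologicalSpace Y] (Z : Set Y) : Prop :=
  ∀ C : Set Y, IsClosed C → ¬ C.Countable → (Z ∩ C).Nonempty ∧ (Zᶜ ∩ C).Nonempty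

lemma key_aux {X Y : Type*} [TopologicalSpace X] [CompactSpace X] [T2Space X]
    [TopologicalSpace Y] [CompactSpace Y] [T2Space Y]
    [MeasurableSpace X] [BorelSpace X] [MeasurableSpace Y] [BorelSpace Y]
    (ρ : X → Y) (hρ : Continuous ρ)
    (μ : Measure X) [IsProbabilityMeasure μ] [μ.Regular]
    (hnull : ∀ y : Y, Measure.map ρ μ {y} = 0)
    (Z : Set Y) (hZ : IsBernstein Z)
    (D : Set X) (hD : MeasurableSet D) (hDZ : D ⊆ ρ ⁻¹' Z) (hDpos : μ D ≠ 0) : False := by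
  have hμD : μ D ≠ ⊤ := measure_ne_top μ D
  have hhalf : μ D / 2 ≠ 0 := by
    simp [ENNReal.div_eq_zero_iff, hDpos]
  obtain ⟨K, hKD, hKc, hK⟩ := hD.exists_isCompact_lt_add hμD hhalf
  have hKpos : μ K ≠ 0 := by
    intro h0
    rw [h0, zero_add] at hK
    exact absurd hK (not_lt.2 (ENNReal.half_le_self))
  -- C := ρ '' K
  set C := ρ '' K with hC
  have hCc : IsCompact C := hKc.image hρ
  have hCcl : IsClosed C := hCc.isClosed
  have hνC : Measure.map ρ μ C ≠ 0 := by
    rw [Measure.map_apply hρ.measurable hCcl.measurableSet]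
    intro h0
    exact hKpos (measure_mono_null (Set.subset_preimage_image ρ K) h0)
  have hCunc : ¬ C.Countable := by
    intro hc
    have : Measure.map ρ μ C = 0 := by
      have : NullSingletonClass (Measure.map ρ μ) := ⟨hnull⟩
      exact hc.measure_zero _
    exact hνC this
  obtain ⟨-, ⟨y, hyZc, hyC⟩⟩ := hZ C hCcl hCunc
  obtain ⟨x, hxK, rfl⟩ := hyC
  exact hyZc (hDZ (hKD hxK))

theorem stmt3 {X Y : Type*} [TopologicalSpace X] [CompactSpace X] [T2Space X]
    [TopologicalSpace Y] [CompactSpace Y] [T2Space Y]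
    [MeasurableSpace X] [BorelSpace X] [MeasurableSpace Y] [BorelSpace Y]
    (ρ : X → Y) (hρ : Continuous ρ) (hsurj : Function.Surjective ρ)
    (μ : Measure X) [IsProbabilityMeasure μ] [μ.Regular]
    (hnull : ∀ y : Y, Measure.map ρ μ {y} = 0)
    (Z : Set Y) (hZ : IsBernstein Z) :
    ¬ NullMeasurableSet (ρ ⁻¹' Z) μ := by
  intro hNM
  have hNMc : NullMeasurableSet (ρ ⁻¹' Zᶜ) μ := by
    rw [Set.preimage_compl]
    exact hNM.compl
  obtain ⟨D, hDsub, hDm, hDeq⟩ := hNM.exists_measurable_subset_ae_eq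
  obtain ⟨D', hDsub', hDm', hDeq'⟩ := hNMc.exists_measurable_subset_ae_eq
  have hZc : IsBernstein Zᶜ := by
    intro C hCcl hCunc
    obtain ⟨h1, h2⟩ := hZ C hCcl hCunc
    rw [compl_compl]
    exact ⟨h2, h1⟩
  -- one of D, D' has positive measure
  have hsum : μ D + μ D' ≠ 0 := by
    intro h0
    have hD0 : μ D = 0 := by simpa using (add_eq_zero.mp h0).1
    have hD0' : μ D' = 0 := by simpa using (add_eq_zero.mp h0).2
    have h1 : μ (ρ ⁻¹' Z) = 0 := by
      calc μ (ρ ⁻¹' Z) = μ D := (measure_congr hDeq).symm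
        _ = 0 := hD0
    have h2 : μ (ρ ⁻¹' Zᶜ) = 0 := by
      calc μ (ρ ⁻¹' Zᶜ) = μ D' := (measure_congr hDeq').symm
        _ = 0 := hD0'
    have : μ Set.univ = 0 := by
      have : (Set.univ : Set X) = ρ ⁻¹' Z ∪ ρ ⁻¹' Zᶜ := by
        rw [← Set.preimage_union, Set.union_compl_self, Set.preimage_univ]
      rw [this]
      exact measure_union_null h1 h2
    simp [measure_univ] at this
  rcases eq_or_ne (μ D) 0 with h | h
  · have h' : μ D' ≠ 0 := fun h2 => hsum (by rw [h, h2, add_zero])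
    exact key_aux ρ hρ μ hnull Zᶜ hZc D' hDm' hDsub' h'
  · exact key_aux ρ hρ μ hnull Z hZ D hDm hDsub h
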